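/- Let C = {z ∈ ℂ^d : |⟨a,z⟩ + b| ≤ ε} with 0 ≠ a ∈ ℂ^d, b ∈ ℂ, ε ≥ 0. For z ∉ C, the nearest-point projection of z onto C (with respect to the real inner product on ℂ^d) is p = z + ((β(z) - ⟨a,z⟩ - b)/‖a‖²)·a, where β(z) = ε(⟨a,z⟩ + b)/|⟨a,z⟩ + b|; and for z ∈ C the projection is z itself. -/

import Mathlib

noncomputable section

/-- Projection onto C = {z ∈ ℂ^d : |⟨a,z⟩ + b| ≤ ε} (a ≠ 0, ε ≥ 0), with ℂ^d regarded as a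
real inner product space: for z ∉ C the nearest point is
z + ((β(z) - ⟨a,z⟩ - b)/‖a‖²)·a with β(z) = ε(⟨a,z⟩+b)/|⟨a,z⟩+b|, and for z ∈ C it is z. -/
theorem projection_onto_sublevel (d : ℕ) (a : EuclideanSpace ℂ (Fin d)) (ha : a ≠ 0)
    (b : ℂ) (ε : ℝ) (hε : 0 ≤ ε) (z : EuclideanSpace ℂ (Fin d)) :
    let C : Set (EuclideanSpace ℂ (Fin d)) :=
      {w | ‖(inner ℂ a w : ℂ) + b‖ ≤ ε}
    let ip : ℂ := (inner ℂ a z : ℂ) + b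
    let β : ℂ := (ε : ℂ) * ip / (‖ip‖ : ℂ)
    let p : EuclideanSpace ℂ (Fin d) :=
      if ‖ip‖ ≤ ε then z else z + ((β - ip) / ((‖a‖ : ℂ) ^ 2)) • a
    p ∈ C ∧ ∀ w ∈ C, dist z p ≤ dist z w := by
  intro C ip β p
  by_cases h : ‖ip‖ ≤ ε
  · constructor
    · show ‖(inner ℂ a p : ℂ) + b‖ ≤ ε
      simp only [p, if_pos h]
      exact h
    · intro w hw
      simp only [p, if_pos h, dist_self]
      exact dist_nonneg
  · push_neg at h
    have hip0 : ip ≠ 0 := by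
      intro h0
      rw [h0] at h
      simp at h
      exact absurd (hε.trans_lt h) (lt_irrefl 0)
    have habs : (0:ℝ) < ‖ip‖ := hε.trans_lt h
    have ha' : (0:ℝ) < ‖a‖ := norm_pos_iff.mpr ha
    have hna : (‖a‖:ℂ) ≠ 0 := by
      exact_mod_cast ha'.ne'
    have hpdef : p = z + ((β - ip) / ((‖a‖ : ℂ) ^ 2)) • a := by
      simp only [p, if_neg (not_le.mpr h)]
    have hinner : (inner ℂ a p : ℂ) + b = β := by
      rw [hpdef, inner_add_right, inner_smul_right, inner_self_eq_norm_sq_to_K]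
      show (inner ℂ a z : ℂ) + (β - ip) / (‖a‖:ℂ)^2 * (‖a‖:ℂ)^2 + b = β
      rw [div_mul_cancel₀ _ (pow_ne_zero 2 hna)]
      simp only [ip]
      ring
    have hβabs : ‖β‖ = ε := by
      simp only [β]
      rw [norm_div, norm_mul, Complex.norm_real, Complex.norm_real, Real.norm_eq_abs, Real.norm_eq_abs,
        abs_of_nonneg hε, abs_of_pos habs]
      field_simp
    have hdiff : β - ip = ip * (((ε : ℂ) - (‖ip‖ : ℂ)) / (‖ip‖ : ℂ)) := by
      have : ((‖ip‖ : ℂ)) ≠ 0 := by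
        exact_mod_cast habs.ne'
      simp only [β]
      field_simp
    have hdiffabs : ‖β - ip‖ = ‖ip‖ - ε := by
      rw [hdiff, norm_mul, norm_div]
      have : (ε : ℂ) - (‖ip‖ : ℂ) = ((ε - ‖ip‖ : ℝ) : ℂ) := by
        push_cast; ring
      rw [this, Complex.norm_real, Complex.norm_real, Real.norm_eq_abs, Real.norm_eq_abs, abs_of_pos habs,
        abs_of_neg (by linarith : ε - ‖ip‖ < 0)]
      field_simp
      ring
    have hdist : dist z p = (‖ip‖ - ε) / ‖a‖ := by
      rw [hpdef, dist_self_add_right, norm_smul, norm_div,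
        hdiffabs]
      have : ‖((‖a‖:ℂ))^2‖ = ‖a‖^2 := by
        rw [norm_pow, Complex.norm_real, norm_norm]
      rw [this]
      field_simp
    constructor
    · show ‖(inner ℂ a p : ℂ) + b‖ ≤ ε
      rw [hinner, hβabs]
    · intro w hw
      have hw' : ‖(inner ℂ a w : ℂ) + b‖ ≤ ε := hw
      have key : ‖ip‖ - ε ≤ ‖a‖ * dist z w := by
        have h1 : ‖ip‖ - ‖(inner ℂ a w : ℂ) + b‖
            ≤ ‖ip - ((inner ℂ a w : ℂ) + b)‖ := by
          exact norm_sub_norm_le ip ((inner ℂ a w : ℂ) + b)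
        have h2 : ip - ((inner ℂ a w : ℂ) + b) = (inner ℂ a (z - w) : ℂ) := by
          simp only [ip, inner_sub_right]
          ring
        have h3 : ‖(inner ℂ a (z - w) : ℂ)‖ ≤ ‖a‖ * ‖z - w‖ := by
          exact norm_inner_le_norm (𝕜 := ℂ) a (z - w)
        rw [h2] at h1
        have := h1.trans h3
        rw [dist_eq_norm]
        linarith
      rw [hdist, div_le_iff₀ ha']
      linarith [key, mul_comm ‖a‖ (dist z w)]
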